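/- Let (β_s)_{s ∈ [0,∞)} ⊂ ℝ^d be a family indexed by α with β^α_s → β ∈ ℝ^d as α → 0. If β_i > 0 then (∇φ̃_α(β^α))_i = arcsinh(β^α_i/α²)/(2 ln(1/α)) converges to 1 as α → 0; if β_i < 0 it converges to −1; and if the full vector ∇φ̃_α(β^α) converges to some η ∈ ℝ^d, then η ∈ ∂‖β‖₁, i.e. η_i = sign(β_i) whenever β_i ≠ 0 and η_i ∈ [−1,1] whenever β_i = 0. -/

import Mathlib

open Filter Real Set

private lemma helper_div {l : Filter ℝ} {a b : ℝ → ℝ} (hb : Tendsto b l atTop) {c : ℝ}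
    (hr : Tendsto (fun x => a x - b x) l (nhds c)) :
    Tendsto (fun x => a x / b x) l (nhds 1) := by
  have h0 : Tendsto (fun x => (a x - b x) / b x) l (nhds 0) := hr.div_atTop hb
  have h1 : Tendsto (fun x => (a x - b x) / b x + 1) l (nhds (0 + 1)) :=
    h0.add tendsto_const_nhds
  rw [zero_add] at h1
  refine h1.congr' ?_
  filter_upwards [hb.eventually_gt_atTop 0] with x hx
  field_simp
  ring

private lemma L1 : Tendsto (fun t : ℝ => Real.arsinh t - Real.log t) atTop
    (nhds (Real.log 2)) := by
  have h1 : Tendsto (fun t : ℝ => 1 / t ^ 2 + 1) atTop (nhds (0 + 1)) := by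
    refine Tendsto.add ?_ tendsto_const_nhds
    have h : Tendsto (fun t : ℝ => t ^ 2) atTop atTop := tendsto_pow_atTop (by norm_num)
    simp only [one_div]
    exact h.inv_tendsto_atTop
  rw [zero_add] at h1
  have h2 : Tendsto (fun t : ℝ => 1 + Real.sqrt (1 / t ^ 2 + 1)) atTop (nhds 2) := by
    have h3 := (Real.continuous_sqrt.tendsto 1).comp h1
    rw [Real.sqrt_one] at h3
    have h4 := (tendsto_const_nhds (x := (1:ℝ)) (f := atTop)).add h3
    norm_num at h4
    simpa [one_div] using h4
  have hmain : Tendsto (fun t : ℝ => Real.log (1 + Real.sqrt (1 / t ^ 2 + 1))) atTop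
      (nhds (Real.log 2)) := ((Real.continuousAt_log (by norm_num)).tendsto).comp h2
  refine hmain.congr' ?_
  filter_upwards [eventually_gt_atTop (0:ℝ)] with t ht
  have hs : Real.sqrt (1 / t ^ 2 + 1) = Real.sqrt (1 + t ^ 2) / t := by
    rw [show (1 / t ^ 2 + 1 : ℝ) = (1 + t ^ 2) / t ^ 2 by field_simp,
      Real.sqrt_div (by positivity), Real.sqrt_sq ht.le]
  have harsinh : Real.arsinh t = Real.log (t + Real.sqrt (1 + t ^ 2)) := rfl
  rw [hs, harsinh, show (1 : ℝ) + Real.sqrt (1 + t ^ 2) / t = (t + Real.sqrt (1 + t ^ 2)) / t by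
    field_simp, Real.log_div (by positivity) ht.ne']

private lemma hb_atTop : Tendsto (fun α : ℝ => 2 * Real.log (1 / α)) (nhdsWithin 0 (Set.Ioi 0))
    atTop := by
  have h1 : Tendsto (fun α : ℝ => -Real.log α) (nhdsWithin 0 (Set.Ioi 0)) atTop :=
    tendsto_neg_atBot_atTop.comp Real.tendsto_log_nhdsGT_zero
  have h2 := h1.const_mul_atTop (by norm_num : (0:ℝ) < 2)
  refine h2.congr fun α => by rw [one_div, Real.log_inv]

private lemma hsq_tendsto : Tendsto (fun α : ℝ => α ^ 2) (nhdsWithin 0 (Set.Ioi 0))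
    (nhdsWithin 0 (Set.Ioi 0)) := by
  rw [tendsto_nhdsWithin_iff]
  constructor
  · have hbase : Tendsto (fun α : ℝ => α) (nhdsWithin 0 (Set.Ioi 0)) (nhds 0) :=
      tendsto_id.mono_right nhdsWithin_le_nhds
    simpa using hbase.pow 2
  · filter_upwards [self_mem_nhdsWithin] with α (hα : (0:ℝ) < α)
    exact pow_pos hα 2

private lemma hinv_sq : Tendsto (fun α : ℝ => (α ^ 2)⁻¹) (nhdsWithin 0 (Set.Ioi 0)) atTop :=
  tendsto_inv_nhdsGT_zero.comp hsq_tendsto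

private lemma pos_case (y : ℝ → ℝ) {L : ℝ} (hL : 0 < L)
    (hy : Tendsto y (nhdsWithin 0 (Set.Ioi 0)) (nhds L)) :
    Tendsto (fun α => Real.arsinh (y α / α ^ 2) / (2 * Real.log (1 / α)))
      (nhdsWithin 0 (Set.Ioi 0)) (nhds 1) := by
  set l := nhdsWithin (0:ℝ) (Set.Ioi 0)
  have hypos : ∀ᶠ α in l, 0 < y α := hy.eventually (eventually_gt_nhds hL)
  have ht : Tendsto (fun α => y α / α ^ 2) l atTop := by
    have := hy.pos_mul_atTop hL hinv_sq
    exact this.congr fun α => (div_eq_mul_inv _ _).symm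
  refine helper_div hb_atTop (c := Real.log 2 + Real.log L) ?_
  have h1 : Tendsto (fun α => (Real.arsinh (y α / α ^ 2) - Real.log (y α / α ^ 2))
      + Real.log (y α)) l (nhds (Real.log 2 + Real.log L)) :=
    (L1.comp ht).add (((Real.continuousAt_log hL.ne').tendsto).comp hy)
  refine h1.congr' ?_
  filter_upwards [self_mem_nhdsWithin, hypos] with α (hα : (0:ℝ) < α) hyα
  rw [Real.log_div hyα.ne' (by positivity), one_div, Real.log_inv, Real.log_pow]
  push_cast
  ring

private lemma neg_case (y : ℝ → ℝ) {L : ℝ} (hL : L < 0)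
    (hy : Tendsto y (nhdsWithin 0 (Set.Ioi 0)) (nhds L)) :
    Tendsto (fun α => Real.arsinh (y α / α ^ 2) / (2 * Real.log (1 / α)))
      (nhdsWithin 0 (Set.Ioi 0)) (nhds (-1)) := by
  have h := pos_case (fun α => -(y α)) (neg_pos.2 hL) hy.neg
  have h2 := h.neg
  refine h2.congr fun α => ?_
  rw [neg_div _ (y α), Real.arsinh_neg, neg_div, neg_neg]

private lemma arsinh_le_log (u : ℝ) (hu : 0 ≤ u) : Real.arsinh u ≤ Real.log (1 + 2 * u) := by
  have hs : Real.sqrt (1 + u ^ 2) ≤ 1 + u := by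
    rw [show (1 + u : ℝ) = Real.sqrt ((1 + u) ^ 2) by rw [Real.sqrt_sq (by positivity)]]
    exact Real.sqrt_le_sqrt (by nlinarith)
  have h1 : Real.arsinh u = Real.log (u + Real.sqrt (1 + u ^ 2)) := rfl
  rw [h1]
  have hpos : (0:ℝ) < u + Real.sqrt (1 + u ^ 2) := by positivity
  apply Real.log_le_log hpos
  linarith

private lemma abs_arsinh (s : ℝ) : |Real.arsinh s| = Real.arsinh |s| := by
  rcases le_or_gt 0 s with h | h
  · rw [abs_of_nonneg h, abs_of_nonneg (Real.arsinh_nonneg_iff.2 h)]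
  · rw [abs_of_neg h, abs_of_neg (Real.arsinh_neg_iff.2 h), ← Real.arsinh_neg]

private lemma g_tendsto : Tendsto (fun α : ℝ => Real.log (1 + 2 / α ^ 2) / (2 * Real.log (1 / α)))
    (nhdsWithin 0 (Set.Ioi 0)) (nhds 1) := by
  refine helper_div hb_atTop (c := Real.log 2) ?_
  have hsq0 : Tendsto (fun α : ℝ => α ^ 2 + 2) (nhdsWithin 0 (Set.Ioi 0)) (nhds 2) := by
    have := (hsq_tendsto.mono_right nhdsWithin_le_nhds).add (tendsto_const_nhds (x := (2:ℝ)))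
    simpa using this
  have h1 : Tendsto (fun α : ℝ => Real.log (α ^ 2 + 2)) (nhdsWithin 0 (Set.Ioi 0))
      (nhds (Real.log 2)) := ((Real.continuousAt_log (by norm_num)).tendsto).comp hsq0
  refine h1.congr' ?_
  filter_upwards [self_mem_nhdsWithin] with α (hα : (0:ℝ) < α)
  rw [show (1 + 2 / α ^ 2 : ℝ) = (α ^ 2 + 2) / α ^ 2 by field_simp,
    Real.log_div (by positivity) (by positivity), Real.log_pow, one_div, Real.log_inv]
  push_cast
  ring

open scoped BigOperators

theorem stmt8 {d : ℕ} (B : ℝ → (Fin d → ℝ)) (β : Fin d → ℝ)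
    (hconv : Filter.Tendsto B (nhdsWithin 0 (Set.Ioi 0)) (nhds β)) :
    (∀ i, 0 < β i → Filter.Tendsto
      (fun α => Real.arsinh (B α i / α ^ 2) / (2 * Real.log (1/α)))
      (nhdsWithin 0 (Set.Ioi 0)) (nhds 1)) ∧
    (∀ i, β i < 0 → Filter.Tendsto
      (fun α => Real.arsinh (B α i / α ^ 2) / (2 * Real.log (1/α)))
      (nhdsWithin 0 (Set.Ioi 0)) (nhds (-1))) ∧
    (∀ η : Fin d → ℝ, Filter.Tendsto
      (fun α => fun i => Real.arsinh (B α i / α ^ 2) / (2 * Real.log (1/α)))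
      (nhdsWithin 0 (Set.Ioi 0)) (nhds η) →
      (∀ i, β i ≠ 0 → η i = Real.sign (β i)) ∧ (∀ i, β i = 0 → |η i| ≤ 1)) := by
  have hcomp : ∀ i, Tendsto (fun α => B α i) (nhdsWithin 0 (Set.Ioi 0)) (nhds (β i)) :=
    fun i => tendsto_pi_nhds.mp hconv i
  refine ⟨fun i hi => pos_case _ hi (hcomp i), fun i hi => neg_case _ hi (hcomp i),
    fun η hη => ?_⟩
  have hηi : ∀ i, Tendsto (fun α => Real.arsinh (B α i / α ^ 2) / (2 * Real.log (1 / α)))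
      (nhdsWithin 0 (Set.Ioi 0)) (nhds (η i)) := fun i => tendsto_pi_nhds.mp hη i
  constructor
  · intro i hne
    rcases hne.lt_or_gt with h | h
    · rw [Real.sign_of_neg h]
      exact tendsto_nhds_unique (hηi i) (neg_case _ h (hcomp i))
    · rw [Real.sign_of_pos h]
      exact tendsto_nhds_unique (hηi i) (pos_case _ h (hcomp i))
  · intro i hzero
    have habs : Tendsto (fun α => |Real.arsinh (B α i / α ^ 2) / (2 * Real.log (1 / α))|)
        (nhdsWithin 0 (Set.Ioi 0)) (nhds |η i|) := (hηi i).abs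
    have hsmall : ∀ᶠ α in nhdsWithin (0:ℝ) (Set.Ioi 0), |B α i| ≤ 1 := by
      have := (hcomp i).abs
      rw [hzero, abs_zero] at this
      exact this.eventually_le_const one_pos
    have hbound : ∀ᶠ α in nhdsWithin (0:ℝ) (Set.Ioi 0),
        |Real.arsinh (B α i / α ^ 2) / (2 * Real.log (1 / α))|
          ≤ Real.log (1 + 2 / α ^ 2) / (2 * Real.log (1 / α)) := by
      filter_upwards [self_mem_nhdsWithin, hsmall, hb_atTop.eventually_gt_atTop 0]
        with α (hα : (0:ℝ) < α) hsm hbpos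
      rw [abs_div, abs_of_pos hbpos]
      have hnum : |Real.arsinh (B α i / α ^ 2)| ≤ Real.log (1 + 2 / α ^ 2) := by
        rw [abs_arsinh]
        have hB : |B α i / α ^ 2| ≤ 1 / α ^ 2 := by
          rw [abs_div, abs_of_pos (by positivity : (0:ℝ) < α ^ 2)]
          gcongr
        calc Real.arsinh |B α i / α ^ 2| ≤ Real.log (1 + 2 * |B α i / α ^ 2|) :=
              arsinh_le_log _ (abs_nonneg _)
          _ ≤ Real.log (1 + 2 / α ^ 2) := by
              apply Real.log_le_log (by positivity)
              calc 1 + 2 * |B α i / α ^ 2| ≤ 1 + 2 * (1 / α ^ 2) := by linarith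
                _ = 1 + 2 / α ^ 2 := by ring
      gcongr
    exact le_of_tendsto_of_tendsto habs g_tendsto hbound
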